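/- Suppose Ω3 = Ω1 + 2Δ. Then for every N > 0, every ρ ∈ [−N/2, N/2], and all φ1, φ3 ∈ ℝ, the trimer Hamiltonian restricted to the even subspace satisfies H(√(N/2−ρ)·e^{iφ1}, 0, √(N/2+ρ)·e^{iφ3}) = 2Δρ − A·N·√(N²−4ρ²)·cos(φ1−φ3) − (3A/2)·(N²−4ρ²)·cos²(φ1−φ3) − (3A/2)·N² + Δ·N + N·Ω1. -/
import Mathlib


open Complex ComplexConjugate

/-- The trimer Hamiltonian on ℂ³ with real parameters Ω₁, Ω₂, Ω₃, A. -/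
noncomputable def trimerH (Ω1 Ω2 Ω3 A : ℝ) (c1 c2 c3 : ℂ) : ℂ :=
  (Ω1 : ℂ) * c1 * conj c1 + (Ω2 : ℂ) * c2 * conj c2 + (Ω3 : ℂ) * c3 * conj c3
    - (A : ℂ) *
      ((3 / 2) * (c1 * conj c1 + c3 * conj c3) ^ 2
        + (3 / 2) * (c1 * conj c3 + conj c1 * c3) ^ 2
        + (c1 * conj c1 + c3 * conj c3) * (c1 * conj c3 + conj c1 * c3)
        + 2 * (c2 * conj c2) ^ 2
        + 4 * (c2 * conj c2) * ((c3 - c1) * (conj c3 - conj c1))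
        + (c3 - c1) ^ 2 * (conj c2) ^ 2
        + (conj c3 - conj c1) ^ 2 * c2 ^ 2)

/-- With `Ω₃ = Ω₁ + 2Δ`, the trimer Hamiltonian restricted to the even subspace
`{c₂ = 0}`, expressed in the canonical polar-type variables `(ρ, φ₁, φ₃)`. -/
theorem trimerH_even_subspace (Ω1 Ω2 Ω3 A Δ : ℝ) (hΩ : Ω3 = Ω1 + 2 * Δ)
    (N ρ φ1 φ3 : ℝ) (hN : 0 < N) (hρ : ρ ∈ Set.Icc (-(N / 2)) (N / 2)) :
    trimerH Ω1 Ω2 Ω3 A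
        ((Real.sqrt (N / 2 - ρ) : ℂ) * Complex.exp (Complex.I * (φ1 : ℂ)))
        0
        ((Real.sqrt (N / 2 + ρ) : ℂ) * Complex.exp (Complex.I * (φ3 : ℂ)))
      = ((2 * Δ * ρ
          - A * N * Real.sqrt (N ^ 2 - 4 * ρ ^ 2) * Real.cos (φ1 - φ3)
          - (3 * A / 2) * (N ^ 2 - 4 * ρ ^ 2) * Real.cos (φ1 - φ3) ^ 2
          - (3 * A / 2) * N ^ 2 + Δ * N + N * Ω1 : ℝ) : ℂ) := by
  obtain ⟨h1, h2⟩ := hρ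
  have ha : (0:ℝ) ≤ N / 2 - ρ := by linarith
  have hb : (0:ℝ) ≤ N / 2 + ρ := by linarith
  set a := N / 2 - ρ with ha'
  set b := N / 2 + ρ with hb'
  set sa := Real.sqrt a with hsa'
  set sb := Real.sqrt b with hsb'
  have hsa : sa ^ 2 = a := Real.sq_sqrt ha
  have hsb : sb ^ 2 = b := Real.sq_sqrt hb
  have hab : 2 * (sa * sb) = Real.sqrt (N ^ 2 - 4 * ρ ^ 2) := by
    rw [hsa', hsb', ← Real.sqrt_mul ha]
    rw [show (2:ℝ) = Real.sqrt 4 by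
      rw [show (4:ℝ) = 2^2 by norm_num, Real.sqrt_sq]; norm_num]
    rw [← Real.sqrt_mul (by norm_num)]
    congr 1; ring
  set c1 : ℂ := (sa : ℂ) * Complex.exp (Complex.I * (φ1 : ℂ)) with hc1'
  set c3 : ℂ := (sb : ℂ) * Complex.exp (Complex.I * (φ3 : ℂ)) with hc3'
  have hc1 : conj c1 = (sa : ℂ) * Complex.exp (-(Complex.I * (φ1 : ℂ))) := by
    simp [hc1', ← Complex.exp_conj, map_mul, Complex.conj_ofReal, Complex.conj_I]
  have hc3 : conj c3 = (sb : ℂ) * Complex.exp (-(Complex.I * (φ3 : ℂ))) := by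
    simp [hc3', ← Complex.exp_conj, map_mul, Complex.conj_ofReal, Complex.conj_I]
  have h11 : c1 * conj c1 = (a : ℂ) := by
    rw [hc1, hc1', show (sa:ℂ) * Complex.exp (Complex.I * (φ1:ℂ)) *
        ((sa:ℂ) * Complex.exp (-(Complex.I * (φ1:ℂ))))
      = (sa:ℂ)^2 * (Complex.exp (Complex.I * (φ1:ℂ) + -(Complex.I * (φ1:ℂ)))) by
        rw [Complex.exp_add]; ring]
    simp [← Complex.ofReal_pow, hsa]
  have h33 : c3 * conj c3 = (b : ℂ) := by
    rw [hc3, hc3', show (sb:ℂ) * Complex.exp (Complex.I * (φ3:ℂ)) *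
        ((sb:ℂ) * Complex.exp (-(Complex.I * (φ3:ℂ))))
      = (sb:ℂ)^2 * (Complex.exp (Complex.I * (φ3:ℂ) + -(Complex.I * (φ3:ℂ)))) by
        rw [Complex.exp_add]; ring]
    simp [← Complex.ofReal_pow, hsb]
  have h13 : c1 * conj c3 + conj c1 * c3
      = ((sa * sb * (2 * Real.cos (φ1 - φ3)) : ℝ) : ℂ) := by
    rw [hc1, hc3, hc1', hc3']
    have e1 : ((φ1:ℂ) - (φ3:ℂ)) * Complex.I
        = Complex.I * (φ1:ℂ) + -(Complex.I * (φ3:ℂ)) := by ring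
    have e2 : (-((φ1:ℂ) - (φ3:ℂ))) * Complex.I
        = -(Complex.I * (φ1:ℂ)) + Complex.I * (φ3:ℂ) := by ring
    have key : Complex.exp (Complex.I * (φ1:ℂ)) * Complex.exp (-(Complex.I * (φ3:ℂ)))
        + Complex.exp (-(Complex.I * (φ1:ℂ))) * Complex.exp (Complex.I * (φ3:ℂ))
        = 2 * Complex.cos ((φ1:ℂ) - (φ3:ℂ)) := by
      rw [Complex.two_cos, e1, e2, Complex.exp_add, Complex.exp_add]
    calc (sa:ℂ) * Complex.exp (Complex.I * (φ1:ℂ)) *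
          ((sb:ℂ) * Complex.exp (-(Complex.I * (φ3:ℂ))))
        + (sa:ℂ) * Complex.exp (-(Complex.I * (φ1:ℂ))) *
          ((sb:ℂ) * Complex.exp (Complex.I * (φ3:ℂ)))
        = (sa:ℂ) * (sb:ℂ) *
          (Complex.exp (Complex.I * (φ1:ℂ)) * Complex.exp (-(Complex.I * (φ3:ℂ)))
            + Complex.exp (-(Complex.I * (φ1:ℂ))) * Complex.exp (Complex.I * (φ3:ℂ))) := by
          ring
      _ = (sa:ℂ) * (sb:ℂ) * (2 * Complex.cos ((φ1:ℂ) - (φ3:ℂ))) := by rw [key]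
      _ = ((sa * sb * (2 * Real.cos (φ1 - φ3)) : ℝ) : ℂ) := by
          push_cast; ring
  have expand : trimerH Ω1 Ω2 Ω3 A c1 0 c3
      = (Ω1:ℂ) * (c1 * conj c1) + (Ω3:ℂ) * (c3 * conj c3)
        - (A:ℂ) * ((3/2) * (c1 * conj c1 + c3 * conj c3)^2
          + (3/2) * (c1 * conj c3 + conj c1 * c3)^2
          + (c1 * conj c1 + c3 * conj c3) * (c1 * conj c3 + conj c1 * c3)) := by
    unfold trimerH
    simp only [map_zero]
    ring
  rw [expand, h11, h33, h13, hΩ]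
  have goal_real : Ω1 * a + (Ω1 + 2*Δ) * b
      - A * ((3/2) * (a + b)^2 + (3/2) * (sa * sb * (2 * Real.cos (φ1 - φ3)))^2
        + (a + b) * (sa * sb * (2 * Real.cos (φ1 - φ3))))
      = 2 * Δ * ρ - A * N * Real.sqrt (N ^ 2 - 4 * ρ ^ 2) * Real.cos (φ1 - φ3)
        - 3 * A / 2 * (N ^ 2 - 4 * ρ ^ 2) * Real.cos (φ1 - φ3) ^ 2
        - 3 * A / 2 * N ^ 2 + Δ * N + N * Ω1 := by
    have hab2 : (sa * sb) ^ 2 = N ^ 2 / 4 - ρ ^ 2 := by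
      rw [mul_pow, hsa, hsb, ha', hb']; ring
    rw [← hab, ha', hb']
    linear_combination (-6 * A * Real.cos (φ1 - φ3) ^ 2) * hab2
  rw [← goal_real]
  push_cast
  ring
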